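/- Under Assumption 1, for all k, ℓ ∈ ℕ₀ one has P(S₊ⁱ = k, S₋ⁱ ≥ ℓ) = P(S₊ⁱ = k + ℓ) = P(S₋ⁱ = k + ℓ). -/

import Mathlib

open MeasureTheory Filter Set ENNReal

noncomputable section

/-- The cluster `C(ω) = {t : I_t(ω) = 1}` of a binary process. -/
def clusterSet {Ω : Type*} (I : ℤ → Ω → Bool) (ω : Ω) : Set ℤ :=
  {t : ℤ | I t ω = true}

/-- Inspected cluster size `Sⁱ(ω) = Σ_{t ∈ ℤ} I_t(ω) ∈ ℕ ∪ {∞}`. -/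
def SiFn {Ω : Type*} (I : ℤ → Ω → Bool) (ω : Ω) : ℕ∞ :=
  {t : ℤ | I t ω = true}.encard

/-- Forward inspected cluster size `S₊ⁱ(ω) = Σ_{t ≥ 1} I_t(ω) ∈ ℕ₀ ∪ {∞}`. -/
def SplusFn {Ω : Type*} (I : ℤ → Ω → Bool) (ω : Ω) : ℕ∞ :=
  {t : ℤ | 0 < t ∧ I t ω = true}.encard

/-- Backward inspected cluster size `S₋ⁱ(ω) = Σ_{t ≤ -1} I_t(ω) ∈ ℕ₀ ∪ {∞}`. -/
def SminusFn {Ω : Type*} (I : ℤ → Ω → Bool) (ω : Ω) : ℕ∞ :=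
  {t : ℤ | t < 0 ∧ I t ω = true}.encard

namespace ClusterAux

abbrev Cfg := ℤ → Bool

def cyl (F : Finset ℤ) (ε : ℤ → Bool) : Set Cfg := {x | ∀ t ∈ F, x t = ε t}

lemma measurableSet_eval (t : ℤ) (b : Bool) : MeasurableSet {x : Cfg | x t = b} := by
  have : {x : Cfg | x t = b} = (fun x : Cfg => x t) ⁻¹' {b} := by ext x; simp
  rw [this]
  exact measurable_pi_apply t (measurableSet_singleton b)

lemma measurableSet_cyl (F : Finset ℤ) (ε : ℤ → Bool) : MeasurableSet (cyl F ε) := by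
  have : cyl F ε = ⋂ t ∈ F, {x : Cfg | x t = ε t} := by ext x; simp [cyl]
  rw [this]
  exact MeasurableSet.biInter F.countable_toSet fun t _ => measurableSet_eval t (ε t)

def cylSets : Set (Set Cfg) := {S | ∃ F ε, S = cyl F ε}

lemma isPiSystem_cylSets : IsPiSystem cylSets := by
  classical
  rintro _ ⟨F, ε, rfl⟩ _ ⟨G, δ, rfl⟩ hne
  obtain ⟨x, hxF, hxG⟩ := hne
  refine ⟨F ∪ G, fun t => if t ∈ F then ε t else δ t, ?_⟩
  ext y
  simp only [cyl, mem_inter_iff, mem_setOf_eq, Finset.mem_union]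
  constructor
  · rintro ⟨h1, h2⟩ t ht
    by_cases hF : t ∈ F
    · simp only [hF, if_true]; exact h1 t hF
    · simp only [hF, if_false]; exact h2 t (ht.resolve_left hF)
  · intro h
    constructor
    · intro t ht
      have := h t (Or.inl ht); simpa [ht] using this
    · intro t ht
      by_cases hF : t ∈ F
      · have := h t (Or.inl hF); simp only [hF, if_true] at this
        rw [this, ← hxF t hF, hxG t ht]
      · have := h t (Or.inr ht); simpa [hF] using this

lemma pi_eq_generateFrom :
    (inferInstance : MeasurableSpace Cfg) = .generateFrom cylSets := by
  apply le_antisymm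
  · have h1 : ∀ t : ℤ, @Measurable Cfg Bool (.generateFrom cylSets) _ (fun x => x t) := by
      intro t
      apply @measurable_to_countable' Bool Cfg _ _ (.generateFrom cylSets) _
      intro b
      have : (fun x : Cfg => x t) ⁻¹' {b} = cyl {t} (fun _ => b) := by
        ext x; simp [cyl]
      rw [this]
      exact .basic _ ⟨{t}, fun _ => b, rfl⟩
    refine iSup_le fun t => ?_
    intro u hu
    obtain ⟨s, hs, rfl⟩ := hu
    exact h1 t hs
  · refine MeasurableSpace.generateFrom_le ?_
    rintro _ ⟨F, ε, rfl⟩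
    exact measurableSet_cyl F ε

def Tsh (u : ℤ) : Cfg → Cfg := fun x t => x (t + u)

lemma measurable_Tsh (u : ℤ) : Measurable (Tsh u) :=
  measurable_pi_lambda _ fun t => measurable_pi_apply (t + u)

def ep (x : Cfg) : ℕ∞ := {t : ℤ | 0 < t ∧ x t = true}.encard
def em (x : Cfg) : ℕ∞ := {t : ℤ | t < 0 ∧ x t = true}.encard

lemma measurableSet_le_encard (k : ℕ) (p : ℤ → Prop) :
    MeasurableSet {x : Cfg | (k : ℕ∞) ≤ ({t : ℤ | p t ∧ x t = true}).encard} := by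
  classical
  have hset : {x : Cfg | (k : ℕ∞) ≤ ({t : ℤ | p t ∧ x t = true}).encard}
      = ⋃ (v : Finset ℤ) (_ : (∀ t ∈ v, p t) ∧ v.card = k), {x : Cfg | ∀ t ∈ v, x t = true} := by
    ext x
    simp only [mem_setOf_eq, mem_iUnion]
    constructor
    · intro h
      obtain ⟨s, hs, hsk⟩ := Set.exists_subset_encard_eq h
      have hfin : s.Finite := Set.finite_of_encard_eq_coe hsk
      refine ⟨hfin.toFinset, ⟨?_, ?_⟩, ?_⟩
      · intro t ht
        rw [Set.Finite.mem_toFinset] at ht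
        exact (hs ht).1
      · rw [hfin.encard_eq_coe_toFinset_card] at hsk
        exact_mod_cast hsk
      · intro t ht
        rw [Set.Finite.mem_toFinset] at ht
        exact (hs ht).2
    · rintro ⟨v, ⟨hvp, hvk⟩, hv⟩
      calc (k : ℕ∞) = (v : Set ℤ).encard := by
            rw [Set.encard_coe_eq_coe_finsetCard, hvk]
        _ ≤ _ := Set.encard_mono (fun t ht => by
            have ht' : t ∈ v := by exact_mod_cast ht
            exact ⟨hvp t ht', hv t ht'⟩)
  rw [hset]
  refine MeasurableSet.iUnion fun v => MeasurableSet.iUnion fun _ => ?_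
  exact measurableSet_cyl v (fun _ => true)

lemma measurableSet_le_ep (k : ℕ) : MeasurableSet {x : Cfg | (k : ℕ∞) ≤ ep x} :=
  measurableSet_le_encard k (fun t => 0 < t)

lemma measurableSet_le_em (k : ℕ) : MeasurableSet {x : Cfg | (k : ℕ∞) ≤ em x} :=
  measurableSet_le_encard k (fun t => t < 0)


section Star
variable (μ : Measure Cfg) [IsProbabilityMeasure μ]

lemma ae_inter0 (h0 : μ {x : Cfg | x 0 = true} = 1) (A : Set Cfg) :
    μ (A ∩ {x : Cfg | x 0 = true}) = μ A := by
  apply measure_inter_conull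
  have hm : MeasurableSet {x : Cfg | x 0 = true} := measurableSet_eval 0 true
  rw [measure_compl hm (measure_ne_top μ _), h0, measure_univ, tsub_self]

lemma star2 (h0 : μ {x : Cfg | x 0 = true} = 1)
    (hstar : ∀ (F : Finset ℤ) (ε : ℤ → Bool) (s : ℤ), 0 ∈ F → s ∈ F → ε 0 = true →
      ε s = true → μ (cyl F ε) = μ (Tsh (-s) ⁻¹' cyl F ε))
    (s : ℤ) (B : Set Cfg) (hB : MeasurableSet B) :
    μ (B ∩ {x : Cfg | x s = true}) = μ (Tsh (-s) ⁻¹' B ∩ {x : Cfg | x (-s) = true}) := by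
  classical
  set E : Set Cfg := {x : Cfg | x 0 = true} ∩ {x : Cfg | x s = true} with hEdef
  have hE : MeasurableSet E := (measurableSet_eval 0 true).inter (measurableSet_eval s true)
  -- the two restricted measures agree
  have hext : μ.restrict E = (μ.map (Tsh (-s))).restrict E := by
    refine ext_of_generate_finite cylSets pi_eq_generateFrom isPiSystem_cylSets ?_ ?_
    · rintro _ ⟨F, ε, rfl⟩
      rw [Measure.restrict_apply (measurableSet_cyl F ε),
        Measure.restrict_apply (measurableSet_cyl F ε),
        Measure.map_apply (measurable_Tsh _) ((measurableSet_cyl F ε).inter hE)]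
      by_cases hcomp : (0 ∈ F → ε 0 = true) ∧ (s ∈ F → ε s = true)
      · set F' : Finset ℤ := insert 0 (insert s F) with hF'
        set ε' : ℤ → Bool := fun t => if t ∈ F then ε t else true with hε'
        have hset : cyl F ε ∩ E = cyl F' ε' := by
          ext x
          simp only [cyl, mem_inter_iff, mem_setOf_eq, hF', Finset.mem_insert, hε', hEdef]
          constructor
          · rintro ⟨h1, h2, h3⟩ t ht
            by_cases hF : t ∈ F
            · simp only [hF, if_true]; exact h1 t hF
            · simp only [hF, if_false]
              rcases ht with rfl | rfl | ht
              · exact h2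
              · exact h3
              · exact absurd ht hF
          · intro h
            refine ⟨fun t ht => by have := h t (Or.inr (Or.inr ht)); simpa [ht] using this,
              ?_, ?_⟩
            · have := h 0 (Or.inl rfl)
              by_cases hF : (0:ℤ) ∈ F
              · simp only [hF, if_true] at this; rw [this]; exact hcomp.1 hF
              · simpa [hF] using this
            · have := h s (Or.inr (Or.inl rfl))
              by_cases hF : s ∈ F
              · simp only [hF, if_true] at this; rw [this]; exact hcomp.2 hF
              · simpa [hF] using this
        have h0F' : (0:ℤ) ∈ F' := Finset.mem_insert_self _ _
        have hsF' : s ∈ F' := Finset.mem_insert_of_mem (Finset.mem_insert_self _ _)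
        have hε'0 : ε' 0 = true := by
          by_cases hF : (0:ℤ) ∈ F
          · simp only [hε', hF, if_true]; exact hcomp.1 hF
          · simp [hε', hF]
        have hε's : ε' s = true := by
          by_cases hF : s ∈ F
          · simp only [hε', hF, if_true]; exact hcomp.2 hF
          · simp [hε', hF]
        rw [hset]
        exact hstar F' ε' s h0F' hsF' hε'0 hε's
      · have hset : cyl F ε ∩ E = ∅ := by
          rw [Set.eq_empty_iff_forall_notMem]
          rintro x ⟨hx, hx0, hxs⟩
          simp only [mem_setOf_eq] at hx0 hxs
          apply hcomp
          exact ⟨fun h => by rw [← hx _ h]; exact hx0, fun h => by rw [← hx _ h]; exact hxs⟩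
        rw [hset]
        simp
    · rw [Measure.restrict_apply_univ, Measure.restrict_apply_univ,
        Measure.map_apply (measurable_Tsh _) hE]
      have h1 : E = cyl (insert 0 {s}) (fun _ => true) := by
        ext x; simp only [cyl, hEdef, mem_inter_iff, mem_setOf_eq, Finset.mem_insert,
          Finset.mem_singleton]
        constructor
        · rintro ⟨h0x, hsx⟩ t ht
          rcases ht with rfl | rfl
          · exact h0x
          · exact hsx
        · intro h; exact ⟨h 0 (Or.inl rfl), h s (Or.inr rfl)⟩
      rw [h1]
      exact hstar (insert 0 {s}) (fun _ => true) s (Finset.mem_insert_self _ _)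
        (Finset.mem_insert_of_mem (Finset.mem_singleton_self s)) rfl rfl
  have key : μ (B ∩ E) = μ (Tsh (-s) ⁻¹' (B ∩ E)) := by
    have h1 := congrArg (fun ν : Measure Cfg => ν B) hext
    simp only [Measure.restrict_apply hB] at h1
    rw [Measure.map_apply (measurable_Tsh _) (hB.inter hE)] at h1
    exact h1
  have hTE : Tsh (-s) ⁻¹' E = {x : Cfg | x (-s) = true} ∩ {x : Cfg | x 0 = true} := by
    ext x
    simp only [hEdef, Set.mem_preimage, mem_inter_iff, mem_setOf_eq, Tsh,
      zero_add, add_neg_cancel, and_comm]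

  calc μ (B ∩ {x : Cfg | x s = true})
      = μ ((B ∩ {x : Cfg | x s = true}) ∩ {x : Cfg | x 0 = true}) :=
        (ae_inter0 μ h0 _).symm
    _ = μ (B ∩ E) := by
        congr 1
        rw [hEdef]
        ext x
        simp only [mem_inter_iff, mem_setOf_eq]
        tauto
    _ = μ (Tsh (-s) ⁻¹' (B ∩ E)) := key
    _ = μ ((Tsh (-s) ⁻¹' B ∩ {x : Cfg | x (-s) = true}) ∩ {x : Cfg | x 0 = true}) := by
        rw [Set.preimage_inter, hTE, Set.inter_assoc]
    _ = μ (Tsh (-s) ⁻¹' B ∩ {x : Cfg | x (-s) = true}) := ae_inter0 μ h0 _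

end Star

lemma enat_succ_le_succ {a : ℕ} {e : ℕ∞} (h : (a : ℕ∞) + 1 ≤ e + 1) : (a : ℕ∞) ≤ e := by
  rcases eq_or_ne e ⊤ with rfl | he
  · exact le_top
  · rw [ENat.add_one_le_iff (by simp : (a : ℕ∞) ≠ ⊤), ENat.lt_add_one_iff he] at h
    exact h

/-- pieces of `{k+1 ≤ S₋, l ≤ S₊}` according to the largest negative one. -/
def Cset (k l : ℕ) (s : ℤ) : Set Cfg :=
  {x | s < 0 ∧ x s = true ∧ (∀ t, s < t → t < 0 → x t = false) ∧
    (l : ℕ∞) ≤ {t : ℤ | t < s ∧ x t = true}.encard ∧ (k : ℕ∞) ≤ ep x}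

/-- pieces of `{k+1 ≤ S₊, l ≤ S₋}` according to the smallest positive one. -/
def Dset (k l : ℕ) (u : ℤ) : Set Cfg :=
  {x | 0 < u ∧ x u = true ∧ (∀ t, 0 < t → t < u → x t = false) ∧
    (k : ℕ∞) ≤ {t : ℤ | u < t ∧ x t = true}.encard ∧ (l : ℕ∞) ≤ em x}

lemma measurableSet_gap (a b : ℤ) :
    MeasurableSet {x : Cfg | ∀ t, a < t → t < b → x t = false} := by
  have : {x : Cfg | ∀ t, a < t → t < b → x t = false}
      = ⋂ t : ℤ, {x : Cfg | a < t → t < b → x t = false} := by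
    ext x; simp
  rw [this]
  refine MeasurableSet.iInter fun t => ?_
  by_cases h1 : a < t
  · by_cases h2 : t < b
    · have : {x : Cfg | a < t → t < b → x t = false} = {x : Cfg | x t = false} := by
        ext x; simp [h1, h2]
      rw [this]; exact measurableSet_eval t false
    · have : {x : Cfg | a < t → t < b → x t = false} = univ := by
        ext x; simp [h2]
      rw [this]; exact MeasurableSet.univ
  · have : {x : Cfg | a < t → t < b → x t = false} = univ := by
      ext x; simp [h1]
    rw [this]; exact MeasurableSet.univ

lemma measurableSet_Cset (k l : ℕ) (s : ℤ) : MeasurableSet (Cset k l s) := by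
  have : Cset k l s = {x : Cfg | s < 0} ∩ ({x : Cfg | x s = true}
      ∩ ({x : Cfg | ∀ t, s < t → t < 0 → x t = false}
      ∩ ({x : Cfg | (l : ℕ∞) ≤ {t : ℤ | t < s ∧ x t = true}.encard}
      ∩ {x : Cfg | (k : ℕ∞) ≤ ep x}))) := by
    ext x; simp only [Cset, mem_setOf_eq, mem_inter_iff, and_assoc]
  rw [this]
  exact (MeasurableSet.const _).inter ((measurableSet_eval s true).inter
    ((measurableSet_gap s 0).inter ((measurableSet_le_encard l (fun t => t < s)).inter
      (measurableSet_le_ep k))))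

lemma measurableSet_Dset (k l : ℕ) (u : ℤ) : MeasurableSet (Dset k l u) := by
  have : Dset k l u = {x : Cfg | 0 < u} ∩ ({x : Cfg | x u = true}
      ∩ ({x : Cfg | ∀ t, 0 < t → t < u → x t = false}
      ∩ ({x : Cfg | (k : ℕ∞) ≤ {t : ℤ | u < t ∧ x t = true}.encard}
      ∩ {x : Cfg | (l : ℕ∞) ≤ em x}))) := by
    ext x; simp only [Dset, mem_setOf_eq, mem_inter_iff, and_assoc]
  rw [this]
  exact (MeasurableSet.const _).inter ((measurableSet_eval u true).inter
    ((measurableSet_gap 0 u).inter ((measurableSet_le_encard k (fun t => u < t)).inter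
      (measurableSet_le_em l))))

lemma unionC (k l : ℕ) :
    (⋃ s : ℤ, Cset k l s) = {x : Cfg | (k : ℕ∞) ≤ ep x ∧ (l : ℕ∞) + 1 ≤ em x} := by
  ext x
  simp only [mem_iUnion, Cset, mem_setOf_eq]
  constructor
  · rintro ⟨s, hs0, hxs, hgap, hl, hk⟩
    refine ⟨hk, ?_⟩
    have hsub : insert s {t : ℤ | t < s ∧ x t = true} ⊆ {t : ℤ | t < 0 ∧ x t = true} := by
      rintro t ht
      rcases Set.mem_insert_iff.mp ht with rfl | ⟨hts, hxt⟩
      · exact ⟨hs0, hxs⟩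
      · exact ⟨hts.trans hs0, hxt⟩
    calc (l : ℕ∞) + 1 ≤ {t : ℤ | t < s ∧ x t = true}.encard + 1 := add_le_add_left hl 1
      _ = (insert s {t : ℤ | t < s ∧ x t = true}).encard :=
          (Set.encard_insert_of_notMem (by simp)).symm
      _ ≤ em x := Set.encard_mono hsub
  · rintro ⟨hk, hl⟩
    have hne : ∃ z : ℤ, z < 0 ∧ x z = true := by
      by_contra h
      push_neg at h
      have : {t : ℤ | t < 0 ∧ x t = true} = ∅ := by
        ext t; simp only [mem_setOf_eq, Set.mem_empty_iff_false, iff_false]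
        rintro ⟨h1, h2⟩
        exact absurd h2 (by simpa using h t h1)
      rw [em, this, Set.encard_empty] at hl
      simp at hl
    obtain ⟨s, ⟨hs0, hxs⟩, hmax⟩ :=
      Int.exists_greatest_of_bdd (P := fun z => z < 0 ∧ x z = true)
        ⟨0, fun z hz => le_of_lt hz.1⟩ hne
    refine ⟨s, hs0, hxs, ?_, ?_, hk⟩
    · intro t hst ht0
      by_contra hxt
      have hxt' : x t = true := by
        cases hxtv : x t
        · exact absurd hxtv hxt
        · rfl
      have := hmax t ⟨ht0, hxt'⟩
      omega
    · have hNeq : {t : ℤ | t < 0 ∧ x t = true} = insert s {t : ℤ | t < s ∧ x t = true} := by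
        ext t
        simp only [mem_setOf_eq, Set.mem_insert_iff]
        constructor
        · rintro ⟨ht0, hxt⟩
          rcases lt_or_eq_of_le (hmax t ⟨ht0, hxt⟩) with h | h
          · exact Or.inr ⟨h, hxt⟩
          · exact Or.inl h
        · rintro (rfl | ⟨hts, hxt⟩)
          · exact ⟨hs0, hxs⟩
          · exact ⟨hts.trans hs0, hxt⟩
      have hl' := hl
      rw [em, hNeq, Set.encard_insert_of_notMem (by simp)] at hl'
      exact enat_succ_le_succ hl'

lemma unionD (k l : ℕ) :
    (⋃ u : ℤ, Dset k l u) = {x : Cfg | (k : ℕ∞) + 1 ≤ ep x ∧ (l : ℕ∞) ≤ em x} := by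
  ext x
  simp only [mem_iUnion, Dset, mem_setOf_eq]
  constructor
  · rintro ⟨u, hu0, hxu, hgap, hkc, hl⟩
    refine ⟨?_, hl⟩
    have hsub : insert u {t : ℤ | u < t ∧ x t = true} ⊆ {t : ℤ | 0 < t ∧ x t = true} := by
      rintro t ht
      rcases Set.mem_insert_iff.mp ht with rfl | ⟨hut, hxt⟩
      · exact ⟨hu0, hxu⟩
      · exact ⟨hu0.trans hut, hxt⟩
    calc (k : ℕ∞) + 1 ≤ {t : ℤ | u < t ∧ x t = true}.encard + 1 := add_le_add_left hkc 1
      _ = (insert u {t : ℤ | u < t ∧ x t = true}).encard :=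
          (Set.encard_insert_of_notMem (by simp)).symm
      _ ≤ ep x := Set.encard_mono hsub
  · rintro ⟨hk, hl⟩
    have hne : ∃ z : ℤ, 0 < z ∧ x z = true := by
      by_contra h
      push_neg at h
      have : {t : ℤ | 0 < t ∧ x t = true} = ∅ := by
        ext t; simp only [mem_setOf_eq, Set.mem_empty_iff_false, iff_false]
        rintro ⟨h1, h2⟩
        exact absurd h2 (by simpa using h t h1)
      rw [ep, this, Set.encard_empty] at hk
      simp at hk
    obtain ⟨u, ⟨hu0, hxu⟩, hmin⟩ :=
      Int.exists_least_of_bdd (P := fun z => 0 < z ∧ x z = true)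
        ⟨0, fun z hz => le_of_lt hz.1⟩ hne
    refine ⟨u, hu0, hxu, ?_, ?_, hl⟩
    · intro t h0t htu
      by_contra hxt
      have hxt' : x t = true := by
        cases hxtv : x t
        · exact absurd hxtv hxt
        · rfl
      have := hmin t ⟨h0t, hxt'⟩
      omega
    · have hNeq : {t : ℤ | 0 < t ∧ x t = true} = insert u {t : ℤ | u < t ∧ x t = true} := by
        ext t
        simp only [mem_setOf_eq, Set.mem_insert_iff]
        constructor
        · rintro ⟨ht0, hxt⟩
          rcases lt_or_eq_of_le (hmin t ⟨ht0, hxt⟩) with h | h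
          · exact Or.inr ⟨h, hxt⟩
          · exact Or.inl h.symm
        · rintro (rfl | ⟨hut, hxt⟩)
          · exact ⟨hu0, hxu⟩
          · exact ⟨hu0.trans hut, hxt⟩
      have hk' := hk
      rw [ep, hNeq, Set.encard_insert_of_notMem (by simp)] at hk'
      exact enat_succ_le_succ hk'

lemma disjC (k l : ℕ) : Pairwise (Function.onFun Disjoint (Cset k l)) := by
  intro s s' hne
  rw [Function.onFun, Set.disjoint_left]
  rintro x ⟨hs0, hxs, hgap, -, -⟩ ⟨hs'0, hxs', hgap', -, -⟩
  rcases lt_or_gt_of_ne hne with h | h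
  · have := hgap s' h hs'0
    rw [hxs'] at this
    simp at this
  · have := hgap' s h hs0
    rw [hxs] at this
    simp at this

lemma disjD (k l : ℕ) : Pairwise (Function.onFun Disjoint (Dset k l)) := by
  intro u u' hne
  rw [Function.onFun, Set.disjoint_left]
  rintro x ⟨hu0, hxu, hgap, -, -⟩ ⟨hu'0, hxu', hgap', -, -⟩
  rcases lt_or_gt_of_ne hne with h | h
  · have := hgap' u hu0 h
    rw [hxu] at this
    simp at this
  · have := hgap u' hu'0 h
    rw [hxu'] at this
    simp at this

section Main
variable (μ : Measure Cfg) [IsProbabilityMeasure μ]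
  (h0 : μ {x : Cfg | x 0 = true} = 1)
  (hstar : ∀ (F : Finset ℤ) (ε : ℤ → Bool) (s : ℤ), 0 ∈ F → s ∈ F → ε 0 = true →
      ε s = true → μ (cyl F ε) = μ (Tsh (-s) ⁻¹' cyl F ε))

include h0 hstar

lemma measure_Cset_eq (k l : ℕ) (s : ℤ) : μ (Cset k l s) = μ (Dset k l (-s)) := by
  rcases lt_or_ge s 0 with hs | hs
  · -- main case
    set Bset : Set Cfg := {x | (∀ t, s < t → t < 0 → x t = false) ∧
      (l : ℕ∞) ≤ {t : ℤ | t < s ∧ x t = true}.encard ∧ (k : ℕ∞) ≤ ep x} with hBdef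
    have hB : MeasurableSet Bset := by
      have : Bset = {x : Cfg | ∀ t, s < t → t < 0 → x t = false}
          ∩ ({x : Cfg | (l : ℕ∞) ≤ {t : ℤ | t < s ∧ x t = true}.encard}
            ∩ {x : Cfg | (k : ℕ∞) ≤ ep x}) := by
        ext x; simp only [hBdef, mem_setOf_eq, mem_inter_iff, and_assoc]
      rw [this]
      exact (measurableSet_gap s 0).inter ((measurableSet_le_encard l (fun t => t < s)).inter
        (measurableSet_le_ep k))
    have hC : Cset k l s = Bset ∩ {x : Cfg | x s = true} := by
      ext x
      simp only [Cset, hBdef, mem_inter_iff, mem_setOf_eq]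
      constructor
      · rintro ⟨-, h2, h3, h4, h5⟩; exact ⟨⟨h3, h4, h5⟩, h2⟩
      · rintro ⟨⟨h3, h4, h5⟩, h2⟩; exact ⟨hs, h2, h3, h4, h5⟩
    rw [hC, star2 μ h0 hstar s Bset hB]
    congr 1
    ext x
    have e1 : {t : ℤ | t < s ∧ x (t + -s) = true}.encard
        = {r : ℤ | r < 0 ∧ x r = true}.encard := by
      have himg : {t : ℤ | t < s ∧ x (t + -s) = true}
          = (fun r => r + s) '' {r : ℤ | r < 0 ∧ x r = true} := by
        ext t
        simp only [mem_image, mem_setOf_eq]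
        constructor
        · rintro ⟨h1, h2⟩
          exact ⟨t + -s, ⟨by omega, h2⟩, by omega⟩
        · rintro ⟨r, ⟨hr, hxr⟩, rfl⟩
          refine ⟨by omega, ?_⟩
          rwa [add_neg_cancel_right]
      rw [himg, (add_left_injective s).encard_image]
    have e2 : {t : ℤ | 0 < t ∧ x (t + -s) = true}.encard
        = {r : ℤ | -s < r ∧ x r = true}.encard := by
      have himg : {t : ℤ | 0 < t ∧ x (t + -s) = true}
          = (fun r => r + s) '' {r : ℤ | -s < r ∧ x r = true} := by
        ext t
        simp only [mem_image, mem_setOf_eq]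
        constructor
        · rintro ⟨h1, h2⟩
          exact ⟨t + -s, ⟨by omega, h2⟩, by omega⟩
        · rintro ⟨r, ⟨hr, hxr⟩, rfl⟩
          refine ⟨by omega, ?_⟩
          rwa [add_neg_cancel_right]
      rw [himg, (add_left_injective s).encard_image]
    have hg : (∀ t, s < t → t < 0 → x (t + -s) = false)
        ↔ (∀ t, 0 < t → t < -s → x t = false) := by
      constructor
      · intro h t h1 h2
        have := h (t + s) (by omega) (by omega)
        rwa [add_neg_cancel_right] at this
      · intro h t h1 h2
        exact h (t + -s) (by omega) (by omega)
    simp only [Set.mem_preimage, mem_inter_iff, mem_setOf_eq, hBdef, Dset, Tsh, ep, em]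
    rw [e1, e2]
    constructor
    · rintro ⟨⟨hgap, hl, hk⟩, hxs⟩
      exact ⟨by omega, hxs, hg.mp hgap, hk, hl⟩
    · rintro ⟨-, hxs, hgap, hk, hl⟩
      exact ⟨⟨hg.mpr hgap, hl, hk⟩, hxs⟩
  · -- both sets are empty
    have h1 : Cset k l s = ∅ := by
      rw [Set.eq_empty_iff_forall_notMem]
      rintro x ⟨h, -⟩
      omega
    have h2 : Dset k l (-s) = ∅ := by
      rw [Set.eq_empty_iff_forall_notMem]
      rintro x ⟨h, -⟩
      omega
    rw [h1, h2]

lemma step_lemma (k l : ℕ) :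
    μ {x : Cfg | (k : ℕ∞) + 1 ≤ ep x ∧ (l : ℕ∞) ≤ em x}
      = μ {x : Cfg | (k : ℕ∞) ≤ ep x ∧ (l : ℕ∞) + 1 ≤ em x} := by
  rw [← unionD k l, ← unionC k l,
    measure_iUnion (disjD k l) (measurableSet_Dset k l),
    measure_iUnion (disjC k l) (measurableSet_Cset k l),
    ← (Equiv.neg ℤ).tsum_eq (fun u => μ (Dset k l u))]
  refine tsum_congr fun s => ?_
  rw [Equiv.neg_apply]
  exact (measure_Cset_eq μ h0 hstar k l s).symm

/-- `c(a, b) = μ(a ≤ S₊, b ≤ S₋)`. -/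
def cc (a b : ℕ) : ℝ≥0∞ :=
  μ {x : Cfg | (a : ℕ∞) ≤ ep x ∧ (b : ℕ∞) ≤ em x}

lemma cc_step (a b : ℕ) : cc μ (a + 1) b = cc μ a (b + 1) := by
  unfold cc
  push_cast
  exact step_lemma μ h0 hstar a b

lemma cc_eq_right (a b : ℕ) : cc μ a b = cc μ (a + b) 0 := by
  induction b generalizing a with
  | zero => rfl
  | succ b ih =>
    rw [← cc_step μ h0 hstar a b, ih (a + 1), show a + 1 + b = a + (b + 1) from by omega]

lemma cc_eq_left (a b : ℕ) : cc μ a b = cc μ 0 (a + b) := by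
  induction a generalizing b with
  | zero => simp
  | succ a ih =>
    rw [cc_step μ h0 hstar a b, ih (b + 1), show a + (b + 1) = a + 1 + b from by omega]

omit [IsProbabilityMeasure μ] h0 hstar in
lemma split_ep (a b : ℕ) :
    μ {x : Cfg | ep x = (a : ℕ∞) ∧ (b : ℕ∞) ≤ em x} + cc μ (a + 1) b = cc μ a b := by
  unfold cc
  push_cast
  have hmeas : MeasurableSet {x : Cfg | (a : ℕ∞) + 1 ≤ ep x ∧ (b : ℕ∞) ≤ em x} := by
    have h1 := measurableSet_le_ep (a + 1)
    push_cast at h1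
    exact h1.inter (measurableSet_le_em b)
  have hdisj : Disjoint {x : Cfg | ep x = (a : ℕ∞) ∧ (b : ℕ∞) ≤ em x}
      {x : Cfg | (a : ℕ∞) + 1 ≤ ep x ∧ (b : ℕ∞) ≤ em x} := by
    rw [Set.disjoint_left]
    rintro x ⟨h1, -⟩ ⟨h2, -⟩
    rw [h1] at h2
    exact absurd ((ENat.add_one_le_iff (by simp)).mp h2) (lt_irrefl _)
  rw [← measure_union hdisj hmeas]
  congr 1
  ext x
  simp only [Set.mem_union, mem_setOf_eq]
  constructor
  · rintro (⟨h1, h2⟩ | ⟨h1, h2⟩)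
    · exact ⟨le_of_eq h1.symm, h2⟩
    · exact ⟨le_trans le_self_add h1, h2⟩
  · rintro ⟨h1, h2⟩
    rcases eq_or_lt_of_le h1 with h | h
    · exact Or.inl ⟨h.symm, h2⟩
    · exact Or.inr ⟨(ENat.add_one_le_iff (by simp)).mpr h, h2⟩

omit [IsProbabilityMeasure μ] h0 hstar in
lemma split_em (a b : ℕ) :
    μ {x : Cfg | (a : ℕ∞) ≤ ep x ∧ em x = (b : ℕ∞)} + cc μ a (b + 1) = cc μ a b := by
  unfold cc
  push_cast
  have hmeas : MeasurableSet {x : Cfg | (a : ℕ∞) ≤ ep x ∧ (b : ℕ∞) + 1 ≤ em x} := by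
    have h1 := measurableSet_le_em (b + 1)
    push_cast at h1
    exact (measurableSet_le_ep a).inter h1
  have hdisj : Disjoint {x : Cfg | (a : ℕ∞) ≤ ep x ∧ em x = (b : ℕ∞)}
      {x : Cfg | (a : ℕ∞) ≤ ep x ∧ (b : ℕ∞) + 1 ≤ em x} := by
    rw [Set.disjoint_left]
    rintro x ⟨-, h1⟩ ⟨-, h2⟩
    rw [h1] at h2
    exact absurd ((ENat.add_one_le_iff (by simp)).mp h2) (lt_irrefl _)
  rw [← measure_union hdisj hmeas]
  congr 1
  ext x
  simp only [Set.mem_union, mem_setOf_eq]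
  constructor
  · rintro (⟨h1, h2⟩ | ⟨h1, h2⟩)
    · exact ⟨h1, le_of_eq h2.symm⟩
    · exact ⟨h1, le_trans le_self_add h2⟩
  · rintro ⟨h1, h2⟩
    rcases eq_or_lt_of_le h2 with h | h
    · exact Or.inl ⟨h1, h.symm⟩
    · exact Or.inr ⟨h1, (ENat.add_one_le_iff (by simp)).mpr h⟩

theorem abstract_main (k l : ℕ) :
    μ {x : Cfg | ep x = (k : ℕ∞) ∧ (l : ℕ∞) ≤ em x}
        = μ {x : Cfg | ep x = ((k + l : ℕ) : ℕ∞)}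
    ∧ μ {x : Cfg | ep x = ((k + l : ℕ) : ℕ∞)}
        = μ {x : Cfg | em x = ((k + l : ℕ) : ℕ∞)} := by
  set m := k + l with hm
  have hXne : cc μ (m + 1) 0 ≠ ∞ := measure_ne_top μ _
  have e1 := split_ep μ k l
  have e2 := split_ep μ m 0
  have e3 := split_em μ 0 m
  -- rewrite the tails using the exchange identities
  have t1 : cc μ (k + 1) l = cc μ (m + 1) 0 := by
    rw [cc_eq_right μ h0 hstar (k + 1) l, show k + 1 + l = m + 1 from by omega]
  have t2 : cc μ k l = cc μ m 0 := by
    rw [cc_eq_right μ h0 hstar k l]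
  have t3 : cc μ 0 m = cc μ m 0 := (cc_eq_left μ h0 hstar m 0).symm
  have t4 : cc μ 0 (m + 1) = cc μ (m + 1) 0 := (cc_eq_left μ h0 hstar (m + 1) 0).symm
  rw [t1, t2] at e1
  rw [t3, t4] at e3
  -- simplify the trivial conjuncts
  have s2 : {x : Cfg | ep x = (m : ℕ∞) ∧ ((0 : ℕ) : ℕ∞) ≤ em x}
      = {x : Cfg | ep x = ((k + l : ℕ) : ℕ∞)} := by
    ext x; simp [hm]
  have s3 : {x : Cfg | ((0 : ℕ) : ℕ∞) ≤ ep x ∧ em x = (m : ℕ∞)}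
      = {x : Cfg | em x = ((k + l : ℕ) : ℕ∞)} := by
    ext x; simp [hm]
  rw [s2] at e2
  rw [s3] at e3
  constructor
  · have := e1.trans e2.symm
    rw [add_comm _ (cc μ (m + 1) 0), add_comm _ (cc μ (m + 1) 0)] at this
    exact (ENNReal.add_right_inj hXne).mp this
  · have := e2.trans e3.symm
    rw [add_comm _ (cc μ (m + 1) 0), add_comm _ (cc μ (m + 1) 0)] at this
    exact (ENNReal.add_right_inj hXne).mp this

end Main

lemma measurableSet_eq_ep (k : ℕ) : MeasurableSet {x : Cfg | ep x = (k : ℕ∞)} := by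
  have hset : {x : Cfg | ep x = (k : ℕ∞)}
      = {x : Cfg | (k : ℕ∞) ≤ ep x} \ {x : Cfg | ((k + 1 : ℕ) : ℕ∞) ≤ ep x} := by
    ext x
    simp only [mem_setOf_eq, Set.mem_diff, mem_setOf_eq, Nat.cast_add, Nat.cast_one]
    constructor
    · rintro h
      refine ⟨le_of_eq h.symm, fun hc => ?_⟩
      rw [h] at hc
      exact absurd ((ENat.add_one_le_iff (by simp)).mp hc) (lt_irrefl _)
    · rintro ⟨h1, h2⟩
      rcases eq_or_lt_of_le h1 with h | h
      · exact h.symm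
      · exact absurd ((ENat.add_one_le_iff (by simp)).mpr h) h2
  rw [hset]
  exact (measurableSet_le_ep k).diff (measurableSet_le_ep (k + 1))

lemma measurableSet_eq_em (k : ℕ) : MeasurableSet {x : Cfg | em x = (k : ℕ∞)} := by
  have hset : {x : Cfg | em x = (k : ℕ∞)}
      = {x : Cfg | (k : ℕ∞) ≤ em x} \ {x : Cfg | ((k + 1 : ℕ) : ℕ∞) ≤ em x} := by
    ext x
    simp only [mem_setOf_eq, Set.mem_diff, mem_setOf_eq, Nat.cast_add, Nat.cast_one]
    constructor
    · rintro h
      refine ⟨le_of_eq h.symm, fun hc => ?_⟩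
      rw [h] at hc
      exact absurd ((ENat.add_one_le_iff (by simp)).mp hc) (lt_irrefl _)
    · rintro ⟨h1, h2⟩
      rcases eq_or_lt_of_le h1 with h | h
      · exact h.symm
      · exact absurd ((ENat.add_one_le_iff (by simp)).mpr h) h2
  rw [hset]
  exact (measurableSet_le_em k).diff (measurableSet_le_em (k + 1))

end ClusterAux

open ClusterAux

/-- Theorem 3.2(a), Equation (3.5): under Assumption 1, for `k, ℓ ∈ ℕ₀`,
`P(S₊ⁱ = k, S₋ⁱ ≥ ℓ) = P(S₊ⁱ = k + ℓ) = P(S₋ⁱ = k + ℓ)`. -/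
theorem cluster_size_eq_ge
    {Ω : Type*} [MeasurableSpace Ω] (P : Measure Ω) [IsProbabilityMeasure P]
    (I : ℤ → Ω → Bool) (hI : ∀ t, Measurable (I t))
    {Ωn : ℕ → Type*} [∀ n, MeasurableSpace (Ωn n)]
    (Pn : ∀ n, Measure (Ωn n)) (hPn : ∀ n, IsProbabilityMeasure (Pn n))
    (In : ∀ n, ℤ → Ωn n → Bool) (hIn : ∀ n t, Measurable (In n t))
    -- `P(I₀ⁿ = 1) > 0` for all `n`
    (hpos : ∀ n, 0 < Pn n {ω | In n 0 ω = true})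
    -- stationarity of each `(Iₜⁿ)ₜ`
    (hstat : ∀ n (F : Finset ℤ) (ε : ℤ → Bool) (k : ℤ),
      Pn n {ω | ∀ t ∈ F, In n t ω = ε t} = Pn n {ω | ∀ t ∈ F, In n (t + k) ω = ε t})
    -- convergence of the conditional finite-dimensional distributions
    (hconv : ∀ (F : Finset ℤ) (ε : ℤ → Bool),
      Tendsto (fun n =>
          Pn n ({ω | ∀ t ∈ F, In n t ω = ε t} ∩ {ω | In n 0 ω = true})
            / Pn n {ω | In n 0 ω = true}) atTop
        (nhds (P {ω | ∀ t ∈ F, I t ω = ε t})))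

    (k l : ℕ) :
    P {ω | SplusFn I ω = (k : ℕ∞) ∧ (l : ℕ∞) ≤ SminusFn I ω}
        = P {ω | SplusFn I ω = ((k + l : ℕ) : ℕ∞)}
    ∧ P {ω | SplusFn I ω = ((k + l : ℕ) : ℕ∞)}
        = P {ω | SminusFn I ω = ((k + l : ℕ) : ℕ∞)} := by
  classical
  -- the law of the limit process on configuration space
  set X : Ω → Cfg := fun ω t => I t ω with hX
  have hXm : Measurable X := measurable_pi_lambda _ fun t => hI t
  set μ : Measure Cfg := P.map X with hμ
  have : IsProbabilityMeasure μ := Measure.isProbabilityMeasure_map hXm.aemeasurable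
  -- `P(I₀ = 1) = 1` in the limit
  have hI0 : P {ω | I 0 ω = false} = 0 := by
    have t1 := hconv {0} (fun _ => false)
    have hempty : ∀ n, ({ω | ∀ t ∈ ({0} : Finset ℤ), In n t ω = (fun _ => false) t}
        ∩ {ω | In n 0 ω = true} : Set (Ωn n)) = ∅ := by
      intro n
      rw [Set.eq_empty_iff_forall_notMem]
      rintro ω ⟨h1, h2⟩
      have := h1 0 (Finset.mem_singleton_self 0)
      simp only [mem_setOf_eq] at h2
      rw [h2] at this
      simp at this
    have t2 : Tendsto (fun n =>
        Pn n ({ω | ∀ t ∈ ({0} : Finset ℤ), In n t ω = (fun _ => false) t}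
          ∩ {ω | In n 0 ω = true}) / Pn n {ω | In n 0 ω = true}) atTop (nhds 0) := by
      have : (fun n => Pn n ({ω | ∀ t ∈ ({0} : Finset ℤ), In n t ω = (fun _ => false) t}
          ∩ {ω | In n 0 ω = true}) / Pn n {ω | In n 0 ω = true}) = fun _ => 0 := by
        funext n
        rw [hempty n]
        simp
      rw [this]
      exact tendsto_const_nhds
    have := tendsto_nhds_unique t1 t2
    have hseteq : {ω | ∀ t ∈ ({0} : Finset ℤ), I t ω = (fun _ => false) t}
        = {ω | I 0 ω = false} := by
      ext ω; simp
    rwa [hseteq] at this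
  have h0P : P {ω | I 0 ω = true} = 1 := by
    have hc : {ω | I 0 ω = true} = {ω | I 0 ω = false}ᶜ := by
      ext ω
      simp only [mem_setOf_eq, Set.mem_compl_iff, mem_setOf_eq]
      cases h : I 0 ω <;> simp
    have hms : MeasurableSet {ω | I 0 ω = false} := (hI 0) (measurableSet_singleton false)
    rw [hc, measure_compl hms (measure_ne_top P _), hI0, measure_univ, tsub_zero]
  -- transfer of `h0` to `μ`
  have h0 : μ {x : Cfg | x 0 = true} = 1 := by
    rw [hμ, Measure.map_apply hXm (measurableSet_eval 0 true)]
    exact h0P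
  -- the shift-invariance identity for the limit law
  have hstarP : ∀ (F : Finset ℤ) (ε : ℤ → Bool) (s : ℤ), 0 ∈ F → s ∈ F → ε 0 = true →
      ε s = true → P {ω | ∀ t ∈ F, I t ω = ε t} = P {ω | ∀ t ∈ F, I (t + -s) ω = ε t} := by
    intro F ε s h0F hsF hε0 hεs
    set G : Finset ℤ := F.image (fun t => t + -s) with hG
    set ε' : ℤ → Bool := fun t => ε (t + s) with hε'
    have h0G : (0 : ℤ) ∈ G := by
      rw [hG]
      exact Finset.mem_image.mpr ⟨s, hsF, by omega⟩
    have hε'0 : ε' 0 = true := by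
      rw [hε']
      simpa using hεs
    have hGset : ∀ n, {ω | ∀ t ∈ G, In n t ω = ε' t}
        = {ω | ∀ t ∈ F, In n (t + -s) ω = ε t} := by
      intro n
      ext ω
      simp only [mem_setOf_eq, hG, Finset.mem_image, hε']
      constructor
      · intro h t ht
        have := h (t + -s) ⟨t, ht, rfl⟩
        rwa [show t + -s + s = t from by omega] at this
      · rintro h u ⟨t, ht, rfl⟩
        rw [h t ht, show t + -s + s = t from by omega]
    have hGsetI : {ω | ∀ t ∈ G, I t ω = ε' t} = {ω | ∀ t ∈ F, I (t + -s) ω = ε t} := by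
      ext ω
      simp only [mem_setOf_eq, hG, Finset.mem_image, hε']
      constructor
      · intro h t ht
        have := h (t + -s) ⟨t, ht, rfl⟩
        rwa [show t + -s + s = t from by omega] at this
      · rintro h u ⟨t, ht, rfl⟩
        rw [h t ht, show t + -s + s = t from by omega]
    have key : ∀ n, Pn n ({ω | ∀ t ∈ G, In n t ω = ε' t} ∩ {ω | In n 0 ω = true})
        = Pn n ({ω | ∀ t ∈ F, In n t ω = ε t} ∩ {ω | In n 0 ω = true}) := by
      intro n
      have e1 : {ω | ∀ t ∈ G, In n t ω = ε' t} ∩ {ω | In n 0 ω = true}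
          = {ω | ∀ t ∈ G, In n t ω = ε' t} := by
        apply Set.inter_eq_self_of_subset_left
        intro ω hω
        have := hω 0 h0G
        simp only [mem_setOf_eq]
        rw [this, hε'0]
      have e2 : {ω | ∀ t ∈ F, In n t ω = ε t} ∩ {ω | In n 0 ω = true}
          = {ω | ∀ t ∈ F, In n t ω = ε t} := by
        apply Set.inter_eq_self_of_subset_left
        intro ω hω
        have := hω 0 h0F
        simp only [mem_setOf_eq]
        rw [this, hε0]
      rw [e1, e2, hGset n, ← hstat n F ε (-s)]
    have t1 := hconv F ε
    have t2 := hconv G ε'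
    have hfun : (fun n => Pn n ({ω | ∀ t ∈ G, In n t ω = ε' t} ∩ {ω | In n 0 ω = true})
          / Pn n {ω | In n 0 ω = true})
        = (fun n => Pn n ({ω | ∀ t ∈ F, In n t ω = ε t} ∩ {ω | In n 0 ω = true})
          / Pn n {ω | In n 0 ω = true}) := by
      funext n
      rw [key n]
    rw [hfun] at t2
    have := tendsto_nhds_unique t1 t2
    rw [← hGsetI]
    exact this
  -- transfer of `hstar` to `μ`
  have hstar : ∀ (F : Finset ℤ) (ε : ℤ → Bool) (s : ℤ), 0 ∈ F → s ∈ F → ε 0 = true →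
      ε s = true → μ (cyl F ε) = μ (Tsh (-s) ⁻¹' cyl F ε) := by
    intro F ε s h0F hsF hε0 hεs
    rw [hμ, Measure.map_apply hXm (measurableSet_cyl F ε),
      Measure.map_apply hXm ((measurable_Tsh (-s)) (measurableSet_cyl F ε))]
    have e1 : X ⁻¹' cyl F ε = {ω | ∀ t ∈ F, I t ω = ε t} := rfl
    have e2 : X ⁻¹' (Tsh (-s) ⁻¹' cyl F ε) = {ω | ∀ t ∈ F, I (t + -s) ω = ε t} := rfl
    rw [e1, e2]
    exact hstarP F ε s h0F hsF hε0 hεs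
  obtain ⟨main1, main2⟩ := abstract_main μ h0 hstar k l
  refine ⟨?_, ?_⟩
  · have p1 : {ω | SplusFn I ω = (k : ℕ∞) ∧ (l : ℕ∞) ≤ SminusFn I ω}
        = X ⁻¹' {x : Cfg | ep x = (k : ℕ∞) ∧ (l : ℕ∞) ≤ em x} := rfl
    have p2 : {ω | SplusFn I ω = ((k + l : ℕ) : ℕ∞)}
        = X ⁻¹' {x : Cfg | ep x = ((k + l : ℕ) : ℕ∞)} := rfl
    rw [p1, p2, ← Measure.map_apply hXm, ← Measure.map_apply hXm, ← hμ]
    · exact main1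
    · exact measurableSet_eq_ep (k + l)
    · exact (measurableSet_eq_ep k).inter (measurableSet_le_em l)
  · have p2 : {ω | SplusFn I ω = ((k + l : ℕ) : ℕ∞)}
        = X ⁻¹' {x : Cfg | ep x = ((k + l : ℕ) : ℕ∞)} := rfl
    have p3 : {ω | SminusFn I ω = ((k + l : ℕ) : ℕ∞)}
        = X ⁻¹' {x : Cfg | em x = ((k + l : ℕ) : ℕ∞)} := rfl
    rw [p2, p3, ← Measure.map_apply hXm, ← Measure.map_apply hXm, ← hμ]
    · exact main2
    · exact measurableSet_eq_em (k + l)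
    · exact measurableSet_eq_ep (k + l)
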